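/- For every integer N ≥ 2 and every real P > 0, there exists a unique φ ∈ [1, N] satisfying (1 + NPφ)^{N-1} = (1 + Pφ(N - φ))^N. -/

import Mathlib

theorem stmt_4 (N : ℕ) (hN : 2 ≤ N) (P : ℝ) (hP : 0 < P) :
    ∃! φ : ℝ, φ ∈ Set.Icc 1 (N : ℝ) ∧
      (1 + (N : ℝ) * P * φ) ^ (N - 1) = (1 + P * φ * ((N : ℝ) - φ)) ^ N := by
  set n : ℝ := (N : ℝ) with hn_def
  have hn2 : (2:ℝ) ≤ n := by rw [hn_def]; exact_mod_cast hN
  have hn1 : (1:ℝ) < n := by linarith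
  have hn0 : (0:ℝ) < n := by linarith
  have hcast : ((N - 1 : ℕ) : ℝ) = n - 1 := by
    have : 1 ≤ N := le_trans (by norm_num) hN
    push_cast [Nat.cast_sub this]; ring
  set g : ℝ → ℝ := fun φ => (n-1) * Real.log (1 + n*P*φ) - n * Real.log (1 + P*φ*(n-φ))
    with hg_def
  -- positivity of the two bases on Icc
  have hApos : ∀ φ ∈ Set.Icc (1:ℝ) n, 0 < 1 + n*P*φ := by
    intro φ hφ; obtain ⟨h1, h2⟩ := hφ
    nlinarith [mul_pos (mul_pos hn0 hP) (lt_of_lt_of_le zero_lt_one h1)]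
  have hBpos : ∀ φ ∈ Set.Icc (1:ℝ) n, 0 < 1 + P*φ*(n-φ) := by
    intro φ hφ; obtain ⟨h1, h2⟩ := hφ
    nlinarith [mul_nonneg (mul_nonneg hP.le (by linarith : (0:ℝ) ≤ φ)) (by linarith : (0:ℝ) ≤ n - φ)]
  -- equivalence of equation with g φ = 0
  have key : ∀ φ ∈ Set.Icc (1:ℝ) n,
      ((1 + n * P * φ) ^ (N - 1) = (1 + P * φ * (n - φ)) ^ N ↔ g φ = 0) := by
    intro φ hφ
    have hA := hApos φ hφ
    have hB := hBpos φ hφ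
    constructor
    · intro h
      have := congrArg Real.log h
      rw [Real.log_pow, Real.log_pow] at this
      rw [hcast] at this
      simp only [hg_def]
      linarith [this]
    · intro h
      have hlog : (n-1) * Real.log (1 + n*P*φ) = n * Real.log (1 + P*φ*(n-φ)) := by
        simp only [hg_def] at h; linarith
      have h2 : Real.log ((1 + n*P*φ) ^ (N-1)) = Real.log ((1 + P*φ*(n-φ)) ^ N) := by
        rw [Real.log_pow, Real.log_pow, hcast]; exact hlog
      exact Real.log_injOn_pos (Set.mem_Ioi.mpr (pow_pos hA _))
        (Set.mem_Ioi.mpr (pow_pos hB _)) h2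
  -- derivative of g
  have hderiv : ∀ φ ∈ Set.Icc (1:ℝ) n,
      HasDerivAt g ((n-1) * (n*P/(1 + n*P*φ)) - n * (P*(n-2*φ)/(1 + P*φ*(n-φ)))) φ := by
    intro φ hφ
    have hA := hApos φ hφ
    have hB := hBpos φ hφ
    have h1 : HasDerivAt (fun x : ℝ => 1 + n*P*x) (n*P) φ := by
      simpa using ((hasDerivAt_id φ).const_mul (n*P)).const_add 1
    have h2 : HasDerivAt (fun x : ℝ => 1 + P*x*(n-x)) (P*(n-2*φ)) φ := by
      have ha : HasDerivAt (fun y : ℝ => P * y) P φ := by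
        simpa using (hasDerivAt_id φ).const_mul P
      have hb : HasDerivAt (fun y : ℝ => n - y) (-1) φ := by
        simpa using (hasDerivAt_id' φ).const_sub n
      have hmul : HasDerivAt (fun x : ℝ => 1 + P*x*(n-x)) (P * (n - φ) + P * φ * -1) φ :=
        (ha.mul hb).const_add 1
      convert hmul using 1
      ring
    have hl1 : HasDerivAt (fun x => Real.log (1 + n*P*x)) (n*P/(1 + n*P*φ)) φ :=
      h1.log (ne_of_gt hA)
    have hl2 : HasDerivAt (fun x => Real.log (1 + P*x*(n-x)))
        (P*(n-2*φ)/(1 + P*φ*(n-φ))) φ :=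
      h2.log (ne_of_gt hB)
    exact (hl1.const_mul (n-1)).sub (hl2.const_mul n)
  -- strict monotonicity
  have hcont : ContinuousOn g (Set.Icc 1 n) := fun φ hφ =>
    (hderiv φ hφ).continuousAt.continuousWithinAt
  have hmono : StrictMonoOn g (Set.Icc 1 n) := by
    apply strictMonoOn_of_deriv_pos (convex_Icc 1 n) hcont
    intro φ hφ
    rw [interior_Icc] at hφ
    obtain ⟨hφ1, hφ2⟩ := hφ
    have hφIcc : φ ∈ Set.Icc (1:ℝ) n := ⟨le_of_lt hφ1, le_of_lt hφ2⟩
    rw [(hderiv φ hφIcc).deriv]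
    have hA := hApos φ hφIcc
    have hB := hBpos φ hφIcc
    have hD : (n-1) * (n*P/(1 + n*P*φ)) - n * (P*(n-2*φ)/(1 + P*φ*(n-φ)))
        = n*P*((n-1)*(1 + P*φ*(n-φ)) - (n-2*φ)*(1 + n*P*φ)) /
          ((1 + n*P*φ)*(1 + P*φ*(n-φ))) := by
      field_simp
    rw [hD]
    apply div_pos
    · apply mul_pos (mul_pos hn0 hP)
      nlinarith [mul_pos (mul_pos hP (lt_trans zero_lt_one hφ1)) (sub_pos.mpr hφ1)]
    · exact mul_pos hA hB
  -- g 1 < 0 via strict concavity of log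
  have hg1 : g 1 < 0 := by
    have hconc := strictConcaveOn_log_Ioi
    have hx : (1 + n*P) ∈ Set.Ioi (0:ℝ) := by simp; nlinarith
    have hy : (1:ℝ) ∈ Set.Ioi (0:ℝ) := by norm_num
    have hxy : (1 + n*P) ≠ 1 := by nlinarith
    have ha : (0:ℝ) < (n-1)/n := div_pos (by linarith) hn0
    have hb : (0:ℝ) < 1/n := by positivity
    have hab : (n-1)/n + 1/n = 1 := by field_simp; ring
    have := hconc.2 hx hy hxy ha hb hab
    simp only [smul_eq_mul, Real.log_one, mul_zero, add_zero] at this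
    have harg : (n-1)/n * (1 + n*P) + 1/n * 1 = 1 + (n-1)*P := by
      field_simp
      ring
    rw [harg] at this
    have hlt : (n-1) * Real.log (1 + n*P) < n * Real.log (1 + (n-1)*P) := by
      have := mul_lt_mul_of_pos_left this hn0
      calc (n-1) * Real.log (1 + n*P) = n * ((n-1)/n * Real.log (1 + n*P)) := by
            field_simp
        _ < n * Real.log (1 + (n-1)*P) := this
    simp only [hg_def]
    have e1 : 1 + n*P*1 = 1 + n*P := by ring
    have e2 : 1 + P*1*(n-1) = 1 + (n-1)*P := by ring
    rw [e1, e2]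
    linarith
  -- g n > 0
  have hgn : 0 < g n := by
    simp only [hg_def]
    have e2 : 1 + P*n*(n-n) = 1 := by ring
    rw [e2, Real.log_one, mul_zero, sub_zero]
    apply mul_pos (by linarith)
    apply Real.log_pos
    nlinarith [mul_pos (mul_pos hn0 hP) hn0]
  -- existence by IVT
  have hIcc : (0:ℝ) ∈ Set.Icc (g 1) (g n) := ⟨le_of_lt hg1, le_of_lt hgn⟩
  obtain ⟨φ, hφmem, hφeq⟩ := intermediate_value_Icc (le_of_lt hn1) hcont hIcc
  refine ⟨φ, ⟨hφmem, (key φ hφmem).2 hφeq⟩, ?_⟩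
  rintro y ⟨hymem, hyeq⟩
  exact hmono.injOn hymem hφmem (by rw [(key y hymem).1 hyeq, hφeq])
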